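/- Moving rows preserves LRS structure: if L is a Littlewood–Richardson skew skyline filling and row i+1 (resp. i−1) is empty, then the diagram obtained by moving all entries of row i to row i+1 (resp. i−1) still satisfies the triple (inversion) conditions, and its column reading word is contre-lattice if and only if that of L is. -/

import Mathlib

open MvPolynomial
open scoped Classical

noncomputable section

/-- Partial sum of the first `k` entries of a weak composition. -/
def psum {n : ℕ} (a : Fin n → ℕ) (k : ℕ) : ℕ :=
  ∑ i ∈ Finset.univ.filter (fun i : Fin n => (i : ℕ) < k), a i

/-- Dominance order: `Dom a b` means `b ≥ a`, i.e. every partial sum of `b`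
is at least the corresponding partial sum of `a`. -/
def Dom {n : ℕ} (a b : Fin n → ℕ) : Prop := ∀ k : ℕ, psum a k ≤ psum b k

/-- `flat a`: the list of nonzero entries of `a`, in order. -/
def flat {n : ℕ} (a : Fin n → ℕ) : List ℕ := (List.ofFn a).filter (· ≠ 0)

/-- The monomial `x^b`. -/
def mono {n : ℕ} (b : Fin n → ℕ) : MvPolynomial (Fin n) ℤ := ∏ i, X i ^ b i

/-- Finite set of weak compositions of length `n` with all entries `≤ N`. -/
def box (n N : ℕ) : Finset (Fin n → ℕ) := Fintype.piFinset fun _ => Finset.range (N + 1)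

/-- A single slide move relative to the base composition `a`: a local move
`(…,0,k,…) → (…,i,j,…)` with `i + j = k`.  When `fixed = true` we additionally
require `j > 0` whenever `k` occupies a position that is nonzero in `a`. -/
def SlideMove {n : ℕ} (a : Fin n → ℕ) (fixed : Bool) (b c : Fin n → ℕ) : Prop :=
  ∃ (p : ℕ) (hp : p + 1 < n) (i j : ℕ),
    b ⟨p, Nat.lt_of_succ_lt hp⟩ = 0 ∧
    i + j = b ⟨p + 1, hp⟩ ∧
    (fixed = true → a ⟨p + 1, hp⟩ ≠ 0 → 0 < j) ∧
    c = Function.update (Function.update b ⟨p, Nat.lt_of_succ_lt hp⟩ i) ⟨p + 1, hp⟩ j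

/-- `b` is a slide of `a`. -/
def Slides {n : ℕ} (a b : Fin n → ℕ) : Prop :=
  Relation.ReflTransGen (SlideMove a false) a b

/-- `b` is a fixed slide of `a`. -/
def FixSlides {n : ℕ} (a b : Fin n → ℕ) : Prop :=
  Relation.ReflTransGen (SlideMove a true) a b

/-- The monomial slide polynomial `M_a`. -/
def Mslide {n : ℕ} (a : Fin n → ℕ) : MvPolynomial (Fin n) ℤ :=
  ∑ b ∈ (box n (∑ i, a i)).filter (fun b => Dom a b ∧ flat b = flat a), mono b

/-- The fundamental slide polynomial `F_a`, as the generating function of slides. -/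
def Fslide {n : ℕ} (a : Fin n → ℕ) : MvPolynomial (Fin n) ℤ :=
  ∑ b ∈ (box n (∑ i, a i)).filter (fun b => Slides a b), mono b

/-- The fundamental particle polynomial `L_a`, the generating function of fixed slides. -/
def Lpart {n : ℕ} (a : Fin n → ℕ) : MvPolynomial (Fin n) ℤ :=
  ∑ b ∈ (box n (∑ i, a i)).filter (fun b => FixSlides a b), mono b

/-- A left swap: exchange entries `b i ≤ b j` with `i < j`. -/
def LSwap {n : ℕ} (b c : Fin n → ℕ) : Prop :=
  ∃ i j : Fin n, i < j ∧ b i ≤ b j ∧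
    c = Function.update (Function.update b i (b j)) j (b i)


/-- The value of the box of an LRS in row `r`, column `c` (column `0` is the
basement; columns `c ≤ a r` contain `∗`, columns `a r < c ≤ b r` contain the
numeric entry `E r c`).  Values live in `ℕ ×ₗ ℕ`: `∗ = ∞` exceeds all numbers,
`∗`'s in a row are equal, and `∗`'s in a column increase from top to bottom
(row `1`, i.e. `r = 0`, is the lowest row). -/
def lrsVal {n : ℕ} (a : Fin n → ℕ) (E : Fin n → ℕ → ℕ) (r : Fin n) (c : ℕ) : ℕ ×ₗ ℕ :=
  if c ≤ a r then toLex (1, n - (r : ℕ)) else toLex (0, E r c)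

/-- All triples of an LRS-type filling of shape `b/a` are inversion triples.
Type A: `γ, α` adjacent in the weakly longer lower row `r` (columns `c, c+1`),
`β` above `α` in row `r'`.  Type B: `γ, α` adjacent in the strictly longer
higher row `r'`, `β` below `γ` in row `r`. -/
def TripleCond {n : ℕ} (a b : Fin n → ℕ) (E : Fin n → ℕ → ℕ) : Prop :=
  (∀ r r' : Fin n, ∀ c : ℕ, r < r' → b r' ≤ b r → c + 1 ≤ b r → c + 1 ≤ b r' →
    lrsVal a E r c < lrsVal a E r' (c + 1) ∨ lrsVal a E r' (c + 1) < lrsVal a E r (c + 1)) ∧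
  (∀ r r' : Fin n, ∀ c : ℕ, r < r' → b r < b r' → c + 1 ≤ b r' → c ≤ b r →
    lrsVal a E r' c < lrsVal a E r c ∨ lrsVal a E r c < lrsVal a E r' (c + 1))

/-- An LRS of shape `b/a`: inner boxes and basement are `∗`, remaining boxes of
`D(b)` carry positive integers, rows weakly decrease, no column repeats among
numeric entries, and all triples are inversion triples. -/
def IsLRS {n : ℕ} (a b : Fin n → ℕ) (E : Fin n → ℕ → ℕ) : Prop :=
  (∀ r, a r ≤ b r) ∧
  (∀ r c, a r < c → c ≤ b r → 0 < E r c) ∧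
  (∀ r c, c + 1 ≤ b r → lrsVal a E r (c + 1) ≤ lrsVal a E r c) ∧
  (∀ r r' : Fin n, ∀ c, r ≠ r' → a r < c → c ≤ b r → a r' < c → c ≤ b r' →
    E r c ≠ E r' c) ∧
  TripleCond a b E

/-- The column word of an LRS: read numeric entries bottom-to-top in each
column, rightmost column first, skipping `∗`. -/
def lrsWord {n : ℕ} (a b : Fin n → ℕ) (E : Fin n → ℕ → ℕ) : List ℕ :=
  ((List.range (∑ r, b r)).reverse).flatMap fun c =>
    (List.finRange n).filterMap fun r =>
      if a r < c + 1 ∧ c + 1 ≤ b r then some (E r (c + 1)) else none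

/-- A word (largest letter `k`) is contre-lattice if every prefix contains at
least as many `k`'s as `(k-1)`'s, at least as many `(k-1)`'s as `(k-2)`'s, etc. -/
def ContreLattice (w : List ℕ) : Prop :=
  ∀ t j, 1 ≤ j → j + 1 ≤ w.foldr max 0 →
    (w.take t).count j ≤ (w.take t).count (j + 1)


section AuxLRS

/-- Transfer of `lrsVal` comparisons along a permutation of rows, provided the
relative order of the two rows is preserved. -/
lemma lrsVal_lt_lrsVal_iff {n : ℕ} (a : Fin n → ℕ) (E : Fin n → ℕ → ℕ)
    (σ : Equiv.Perm (Fin n)) (r r' : Fin n) (c c' : ℕ)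
    (hiff : ((r' : ℕ) < (r : ℕ)) ↔ ((σ r' : ℕ) < (σ r : ℕ))) :
    (lrsVal (a ∘ σ) (fun s c => E (σ s) c) r c < lrsVal (a ∘ σ) (fun s c => E (σ s) c) r' c'
      ↔ lrsVal a E (σ r) c < lrsVal a E (σ r') c') := by
  have h1 : (r : ℕ) < n := r.isLt
  have h2 : (r' : ℕ) < n := r'.isLt
  have h3 : ((σ r : Fin n) : ℕ) < n := (σ r).isLt
  have h4 : ((σ r' : Fin n) : ℕ) < n := (σ r').isLt
  unfold lrsVal
  simp only [Function.comp_apply]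
  split_ifs with hc hc' hc'
  · simp only [Prod.Lex.lt_iff, ofLex_toLex]
    simp only [lt_self_iff_false, false_or, true_and, eq_self_iff_true]
    omega
  · simp [Prod.Lex.lt_iff]
  · simp [Prod.Lex.lt_iff]
  · rfl

/-- `filterMap` over `finRange` is unchanged by an adjacent transposition when
one of the two swapped entries is mapped to `none`. -/
lemma filterMap_swap_adj {n : ℕ} {β : Type*} (f : Fin n → Option β) (i : ℕ) (hi : i + 1 < n)
    (hnone : f ⟨i, Nat.lt_of_succ_lt hi⟩ = none ∨ f ⟨i + 1, hi⟩ = none) :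
    (List.finRange n).filterMap
        (fun r => f (Equiv.swap (⟨i, Nat.lt_of_succ_lt hi⟩ : Fin n) ⟨i + 1, hi⟩ r))
      = (List.finRange n).filterMap f := by
  set i0 : Fin n := ⟨i, Nat.lt_of_succ_lt hi⟩ with hi0
  set i1 : Fin n := ⟨i + 1, hi⟩ with hi1
  set σ := Equiv.swap i0 i1 with hσ
  have hlen : (List.finRange n).length = n := List.length_finRange
  have hdrop1 : (List.finRange n).drop i = i0 :: (List.finRange n).drop (i + 1) := by
    rw [List.drop_eq_getElem_cons (by omega)]
    congr 1
    simp [List.getElem_finRange, hi0, Fin.ext_iff]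
  have hdrop2 : (List.finRange n).drop (i+1) = i1 :: (List.finRange n).drop (i + 2) := by
    rw [List.drop_eq_getElem_cons (by omega)]
    congr 1
    simp [List.getElem_finRange, hi1, Fin.ext_iff]
  have hdecomp : List.finRange n
      = (List.finRange n).take i ++ i0 :: i1 :: (List.finRange n).drop (i + 2) := by
    conv_lhs => rw [← List.take_append_drop i (List.finRange n)]
    rw [hdrop1, hdrop2]
  have htake : ∀ x ∈ (List.finRange n).take i, σ x = x := by
    intro x hx
    obtain ⟨k, hk, he⟩ := List.mem_iff_getElem.mp hx
    rw [List.getElem_take] at he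
    rw [List.getElem_finRange] at he
    have hk' : k < i := by
      have := hk
      simp [List.length_take, hlen] at this
      omega
    have hx0 : x ≠ i0 := by
      rw [← he]; simp [hi0, Fin.ext_iff]; omega
    have hx1 : x ≠ i1 := by
      rw [← he]; simp [hi1, Fin.ext_iff]; omega
    exact Equiv.swap_apply_of_ne_of_ne hx0 hx1
  have hdropfix : ∀ x ∈ (List.finRange n).drop (i + 2), σ x = x := by
    intro x hx
    obtain ⟨k, hk, he⟩ := List.mem_iff_getElem.mp hx
    rw [List.getElem_drop] at he
    rw [List.getElem_finRange] at he
    have hx0 : x ≠ i0 := by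
      rw [← he]; simp [hi0, Fin.ext_iff]; omega
    have hx1 : x ≠ i1 := by
      rw [← he]; simp [hi1, Fin.ext_iff]; omega
    exact Equiv.swap_apply_of_ne_of_ne hx0 hx1
  have key : ∀ l₁ l₂ : List (Fin n), (∀ x ∈ l₁, σ x = x) → (∀ x ∈ l₂, σ x = x) →
      (l₁ ++ i0 :: i1 :: l₂).filterMap (fun r => f (σ r))
        = (l₁ ++ i0 :: i1 :: l₂).filterMap f := by
    intro l₁ l₂ h₁ h₂
    have e1 : l₁.filterMap (fun r => f (σ r)) = l₁.filterMap f :=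
      List.filterMap_congr (by intro x hx; rw [h₁ x hx])
    have e2 : l₂.filterMap (fun r => f (σ r)) = l₂.filterMap f :=
      List.filterMap_congr (by intro x hx; rw [h₂ x hx])
    simp only [List.filterMap_append, List.filterMap_cons, Equiv.swap_apply_left,
      Equiv.swap_apply_right, e1, e2, hσ]
    rcases hnone with hn | hn <;> rw [hn] <;> simp only [← hσ, e1, e2]
  conv_lhs => rw [hdecomp]
  conv_rhs => rw [hdecomp]
  exact key _ _ htake hdropfix

end AuxLRS

/-- moving an occupied row of an LRS into an adjacent empty row
(up if row `i+1` is empty, down if row `i` is empty — i.e. swapping the two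
adjacent rows, one of which is empty) preserves the triple (inversion)
conditions, and the resulting column word is contre-lattice if and only if the
original one is. -/
theorem lrs_swap_rows {n : ℕ} (a b : Fin n → ℕ) (E : Fin n → ℕ → ℕ)
    (h : IsLRS a b E) (i : ℕ) (hi : i + 1 < n)
    (hempty : b ⟨i + 1, hi⟩ = 0 ∨ b ⟨i, Nat.lt_of_succ_lt hi⟩ = 0) :
    TripleCond (a ∘ Equiv.swap ⟨i, Nat.lt_of_succ_lt hi⟩ ⟨i + 1, hi⟩)
        (b ∘ Equiv.swap ⟨i, Nat.lt_of_succ_lt hi⟩ ⟨i + 1, hi⟩)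
        (fun r c => E (Equiv.swap (⟨i, Nat.lt_of_succ_lt hi⟩ : Fin n) ⟨i + 1, hi⟩ r) c) ∧
    (ContreLattice
        (lrsWord (a ∘ Equiv.swap ⟨i, Nat.lt_of_succ_lt hi⟩ ⟨i + 1, hi⟩)
          (b ∘ Equiv.swap ⟨i, Nat.lt_of_succ_lt hi⟩ ⟨i + 1, hi⟩)
          (fun r c => E (Equiv.swap (⟨i, Nat.lt_of_succ_lt hi⟩ : Fin n) ⟨i + 1, hi⟩ r) c)) ↔
      ContreLattice (lrsWord a b E)) := by
  have hi0lt : i < n := Nat.lt_of_succ_lt hi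
  set i0 : Fin n := ⟨i, Nat.lt_of_succ_lt hi⟩ with hi0
  set i1 : Fin n := ⟨i + 1, hi⟩ with hi1
  set σ := Equiv.swap i0 i1 with hσ
  obtain ⟨hab, hpos, hrow, hcol, hA, hB⟩ := h
  have hval : ∀ x : Fin n, ((σ x : Fin n) : ℕ)
      = if (x : ℕ) = i then i + 1 else if (x : ℕ) = i + 1 then i else (x : ℕ) := by
    intro x
    rcases eq_or_ne x i0 with rfl | h0
    · simp [hσ, Equiv.swap_apply_left, hi0, hi1]
    · rcases eq_or_ne x i1 with rfl | h1
      · have : ((i1 : Fin n) : ℕ) ≠ i := by simp [hi1]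
        simp [hσ, Equiv.swap_apply_right, hi0, hi1, this]
      · have e0 : (x : ℕ) ≠ i := fun hh => h0 (Fin.ext (by simpa [hi0] using hh))
        have e1 : (x : ℕ) ≠ i + 1 := fun hh => h1 (Fin.ext (by simpa [hi1] using hh))
        rw [hσ, Equiv.swap_apply_of_ne_of_ne h0 h1]
        simp [e0, e1]
  -- order preservation for non-special pairs
  have horder : ∀ r r' : Fin n, (r : ℕ) < (r' : ℕ) → ¬((r : ℕ) = i ∧ (r' : ℕ) = i + 1) →
      ((σ r : Fin n) : ℕ) < ((σ r' : Fin n) : ℕ) := by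
    intro r r' hlt hsp
    have e1 := hval r
    have e2 := hval r'
    split_ifs at e1 e2 <;> omega
  constructor
  · constructor
    · -- Type A triples
      intro r r' c hlt hb hc1 hc2
      by_cases hsp : (r : ℕ) = i ∧ (r' : ℕ) = i + 1
      · -- special pair: one of the two rows is empty, hypotheses contradictory
        exfalso
        have hr : r = i0 := Fin.ext (by simpa [hi0] using hsp.1)
        have hr' : r' = i1 := Fin.ext (by simpa [hi1] using hsp.2)
        subst hr; subst hr'
        have e1 : (b ∘ σ) i0 = b i1 := by simp [hσ, Function.comp]
        have e2 : (b ∘ σ) i1 = b i0 := by simp [hσ, Function.comp]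
        rw [e1] at hc1
        rw [e2] at hc2
        rcases hempty with hn | hn <;> omega
      · have hlt' : (r : ℕ) < (r' : ℕ) := hlt
        have hord := horder r r' hlt' hsp
        have h12 : ¬ ((r' : ℕ) < (r : ℕ)) := by omega
        have h34 : ¬ (((σ r' : Fin n) : ℕ) < ((σ r : Fin n) : ℕ)) := by omega
        have t1 := lrsVal_lt_lrsVal_iff a E σ r r' c (c + 1) (by omega)
        have t2 := lrsVal_lt_lrsVal_iff a E σ r' r (c + 1) (c + 1) (by omega)
        have := hA (σ r) (σ r') c (by exact hord) hb hc1 hc2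
        rcases this with hcase | hcase
        · exact Or.inl (t1.mpr hcase)
        · exact Or.inr (t2.mpr hcase)
    · -- Type B triples
      intro r r' c hlt hb hc1 hc2
      by_cases hsp : (r : ℕ) = i ∧ (r' : ℕ) = i + 1
      · have hr : r = i0 := Fin.ext (by simpa [hi0] using hsp.1)
        have hr' : r' = i1 := Fin.ext (by simpa [hi1] using hsp.2)
        subst hr; subst hr'
        have e1 : (b ∘ σ) i0 = b i1 := by simp [hσ, Function.comp]
        have e2 : (b ∘ σ) i1 = b i0 := by simp [hσ, Function.comp]
        rw [e1, e2] at hb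
        rw [e2] at hc1
        rw [e1] at hc2
        -- b i1 < b i0 forces b i1 = 0 (from hempty), hence c = 0
        have hbi1 : b i1 = 0 := by
          rcases hempty with hn | hn
          · exact hn
          · omega
        have hc0 : c = 0 := by omega
        subst hc0
        -- both entries in column 0 are stars; compare their row heights
        left
        unfold lrsVal
        have g1 : (0 : ℕ) ≤ (a ∘ σ) i1 := Nat.zero_le _
        have g2 : (0 : ℕ) ≤ (a ∘ σ) i0 := Nat.zero_le _
        rw [if_pos g1, if_pos g2]
        rw [Prod.Lex.lt_iff]
        right
        constructor
        · rfl
        · simp only [hi0, hi1, ofLex_toLex, Fin.val_mk]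
          omega
      · have hlt' : (r : ℕ) < (r' : ℕ) := hlt
        have hord := horder r r' hlt' hsp
        have t1 := lrsVal_lt_lrsVal_iff a E σ r' r c c (by omega)
        have t2 := lrsVal_lt_lrsVal_iff a E σ r r' c (c + 1) (by omega)
        have := hB (σ r) (σ r') c (by exact hord) hb hc1 hc2
        rcases this with hcase | hcase
        · exact Or.inl (t1.mpr hcase)
        · exact Or.inr (t2.mpr hcase)
  · -- the column word is unchanged
    have hword : lrsWord (a ∘ σ) (b ∘ σ) (fun r c => E (σ r) c) = lrsWord a b E := by
      unfold lrsWord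
      have hsum : (∑ r, (b ∘ σ) r) = ∑ r, b r := Equiv.sum_comp σ b
      rw [hsum]
      congr 1
      funext c
      have := filterMap_swap_adj
        (fun r => if a r < c + 1 ∧ c + 1 ≤ b r then some (E r (c + 1)) else none) i hi ?_
      · simpa [Function.comp] using this
      · rcases hempty with hn | hn
        · right
          have hb0 : b (⟨i + 1, hi⟩ : Fin n) = 0 := hn
          simp [hb0]
        · left
          have hb0 : b (⟨i, Nat.lt_of_succ_lt hi⟩ : Fin n) = 0 := hn
          simp [hb0]
    rw [hword]


end
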